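/- Let (T,I,N) be an IMTL triplet with T continuous, and let c ∈ [0,1]. If λ₁ = I(λ₂, c) and λ₁ < 1 (equivalently λ₂ > c since I is the residual implicator, interpreting c = N(R(v,u))), then also λ₂ = I(λ₁, c). That is, the adjacency relation between granules is symmetric for parameters smaller than 1. -/

import Mathlib

/-- Symmetry of the adjacency relation for parameters smaller than 1
    (continuous IMTL t-norm). -/
theorem stmt_17 (T I : ℝ → ℝ → ℝ) (Nf : ℝ → ℝ)
    (hTmem : ∀ x ∈ Set.Icc (0:ℝ) 1, ∀ y ∈ Set.Icc (0:ℝ) 1, T x y ∈ Set.Icc (0:ℝ) 1)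
    (hTcomm : ∀ x ∈ Set.Icc (0:ℝ) 1, ∀ y ∈ Set.Icc (0:ℝ) 1, T x y = T y x)
    (hTassoc : ∀ x ∈ Set.Icc (0:ℝ) 1, ∀ y ∈ Set.Icc (0:ℝ) 1, ∀ z ∈ Set.Icc (0:ℝ) 1,
      T (T x y) z = T x (T y z))
    (hTmono : ∀ x ∈ Set.Icc (0:ℝ) 1, ∀ y ∈ Set.Icc (0:ℝ) 1, ∀ z ∈ Set.Icc (0:ℝ) 1,
      y ≤ z → T x y ≤ T x z)
    (hTone : ∀ x ∈ Set.Icc (0:ℝ) 1, T x 1 = x)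
    (hTcont : ContinuousOn (fun p : ℝ × ℝ => T p.1 p.2)
      (Set.Icc (0:ℝ) 1 ×ˢ Set.Icc (0:ℝ) 1))
    (hImem : ∀ x ∈ Set.Icc (0:ℝ) 1, ∀ y ∈ Set.Icc (0:ℝ) 1, I x y ∈ Set.Icc (0:ℝ) 1)
    (hres : ∀ x ∈ Set.Icc (0:ℝ) 1, ∀ y ∈ Set.Icc (0:ℝ) 1, ∀ z ∈ Set.Icc (0:ℝ) 1,
      (T x y ≤ z ↔ x ≤ I y z))
    (hN : ∀ x ∈ Set.Icc (0:ℝ) 1, Nf x = I x 0)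
    (hinv : ∀ x ∈ Set.Icc (0:ℝ) 1, Nf (Nf x) = x)
    (lam1 lam2 c : ℝ)
    (hlam1 : lam1 ∈ Set.Icc (0:ℝ) 1) (hlam2 : lam2 ∈ Set.Icc (0:ℝ) 1)
    (hc : c ∈ Set.Icc (0:ℝ) 1)
    (hadj : lam1 = I lam2 c) (hlt : lam1 < 1) :
    lam2 = I lam1 c := by
  set S := Set.Icc (0:ℝ) 1 with hS
  have h0 : (0:ℝ) ∈ S := by constructor <;> norm_num
  have h1 : (1:ℝ) ∈ S := by constructor <;> norm_num
  have hNmem : ∀ x ∈ S, Nf x ∈ S := fun x hx => by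
    rw [hN x hx]; exact hImem x hx 0 h0
  -- T 1 x = x
  have hT1 : ∀ x ∈ S, T 1 x = x := fun x hx => by
    rw [hTcomm 1 h1 x hx]; exact hTone x hx
  -- T x 0 = 0
  have hT0 : ∀ x ∈ S, T x 0 = 0 := fun x hx => by
    have h := (hTmem x hx 0 h0).1
    have h2 : T x 0 ≤ T x 1 := hTmono x hx 0 h0 1 h1 (by norm_num)
    rw [hTone x hx] at h2
    have h3 : T x 0 = T 0 x := hTcomm x hx 0 h0
    have h4 : T 0 x ≤ T 0 1 := hTmono 0 h0 x hx 1 h1 hx.2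
    rw [hTone 0 h0] at h4
    linarith [h3 ▸ h4, h]
  -- basic residuation consequence
  have hTI : ∀ x ∈ S, ∀ y ∈ S, T (I x y) x ≤ y := fun x hx y hy =>
    (hres (I x y) (hImem x hx y hy) x hx y hy).mpr le_rfl
  -- T x (Nf x) ≤ 0
  have hTN : ∀ x ∈ S, T x (Nf x) ≤ 0 := fun x hx => by
    rw [hTcomm x hx (Nf x) (hNmem x hx), hN x hx]
    exact hTI x hx 0 h0
  -- monotone in first argument
  have hTmono1 : ∀ x ∈ S, ∀ y ∈ S, ∀ z ∈ S, y ≤ z → T y x ≤ T z x := by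
    intro x hx y hy z hz h
    rw [hTcomm y hy x hx, hTcomm z hz x hx]
    exact hTmono x hx y hy z hz h
  -- representation: I x y = Nf (T x (Nf y))
  have hrep : ∀ x ∈ S, ∀ y ∈ S, I x y = Nf (T x (Nf y)) := by
    intro x hx y hy
    have hNy := hNmem y hy
    have hTxNy := hTmem x hx (Nf y) hNy
    have hIxy := hImem x hx y hy
    apply le_antisymm
    · rw [hN _ hTxNy]
      rw [← hres (I x y) hIxy (T x (Nf y)) hTxNy 0 h0]
      have e1 : T (I x y) (T x (Nf y)) = T (T (I x y) x) (Nf y) :=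
        (hTassoc (I x y) hIxy x hx (Nf y) hNy).symm
      rw [e1]
      calc T (T (I x y) x) (Nf y) ≤ T y (Nf y) :=
            hTmono1 (Nf y) hNy (T (I x y) x) (hTmem (I x y) hIxy x hx) y hy (hTI x hx y hy)
        _ ≤ 0 := hTN y hy
    · have hu := hNmem _ hTxNy
      rw [← hres (Nf (T x (Nf y))) hu x hx y hy]
      have hy' : y = I (Nf y) 0 := by rw [← hN (Nf y) hNy, hinv y hy]
      conv_rhs => rw [hy']
      rw [← hres (T (Nf (T x (Nf y))) x) (hTmem _ hu x hx) (Nf y) hNy 0 h0]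
      rw [hTassoc (Nf (T x (Nf y))) hu x hx (Nf y) hNy]
      rw [hres (Nf (T x (Nf y))) hu (T x (Nf y)) hTxNy 0 h0]
      rw [← hN _ hTxNy]
  -- c ≤ lam2
  have hcl : c ≤ lam2 := by
    by_contra h
    push_neg at h
    have : (1:ℝ) ≤ I lam2 c := by
      rw [← hres 1 h1 lam2 hlam2 c hc, hT1 lam2 hlam2]
      exact le_of_lt h
    rw [← hadj] at this
    linarith
  -- Nf antitone: Nf lam2 ≤ Nf c
  have hNanti : Nf lam2 ≤ Nf c := by
    rw [hN lam2 hlam2, hN c hc]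
    rw [← hres (I lam2 0) (hImem lam2 hlam2 0 h0) c hc 0 h0]
    calc T (I lam2 0) c ≤ T (I lam2 0) lam2 :=
          hTmono (I lam2 0) (hImem lam2 hlam2 0 h0) c hc lam2 hlam2 hcl
      _ ≤ 0 := hTI lam2 hlam2 0 h0
  -- divisibility: T (Nf c) z = Nf lam2 for z = I (Nf c) (Nf lam2)
  have hNc := hNmem c hc
  have hNl2 := hNmem lam2 hlam2
  have hdiv : T (Nf c) (I (Nf c) (Nf lam2)) = Nf lam2 := by
    have hIm := hImem (Nf c) hNc (Nf lam2) hNl2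
    apply le_antisymm
    · rw [hTcomm (Nf c) hNc _ hIm]
      exact hTI (Nf c) hNc (Nf lam2) hNl2
    · -- IVT
      have hcont : ContinuousOn (fun z : ℝ => T (Nf c) z) (Set.Icc 0 1) := by
        have : ContinuousOn (fun z : ℝ => ((Nf c, z) : ℝ × ℝ)) (Set.Icc 0 1) :=
          (continuousOn_const.prodMk continuousOn_id)
        exact hTcont.comp this (fun z hz => Set.mk_mem_prod hNc hz)
      have hiv := intermediate_value_Icc (by norm_num : (0:ℝ) ≤ 1) hcont
      have hmemy : Nf lam2 ∈ Set.Icc (T (Nf c) 0) (T (Nf c) 1) := by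
        rw [hT0 (Nf c) hNc, hTone (Nf c) hNc]
        exact ⟨hNl2.1, hNanti⟩
      obtain ⟨z, hz, hzv⟩ := hiv hmemy
      have hzle : z ≤ I (Nf c) (Nf lam2) := by
        rw [← hres z hz (Nf c) hNc (Nf lam2) hNl2, hTcomm z hz (Nf c) hNc]
        exact le_of_eq hzv
      calc Nf lam2 = T (Nf c) z := hzv.symm
        _ ≤ T (Nf c) (I (Nf c) (Nf lam2)) := hTmono (Nf c) hNc z hz _ hIm hzle
  -- contraposition: I (Nf c) (Nf lam2) = lam1
  have hcontra : I (Nf c) (Nf lam2) = lam1 := by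
    rw [hrep (Nf c) hNc (Nf lam2) hNl2, hinv lam2 hlam2,
        hTcomm (Nf c) hNc lam2 hlam2, ← hrep lam2 hlam2 c hc, ← hadj]
  rw [hcontra] at hdiv
  -- conclude
  rw [hrep lam1 hlam1 c hc, hTcomm lam1 hlam1 (Nf c) hNc, hdiv, hinv lam2 hlam2]
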